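/- arXiv:1211.6603 — 3 statements merged into one kernel-verified Lean document; each statement's English description precedes it below -/
import Mathlib

section
/- Let 𝔤 be a DGLA with central subcomplex 𝔞, and let μ ∈ 𝔤¹ be such that the image μ + 𝔞¹ is a Maurer-Cartan element of 𝔤/𝔞. Then F(μ) ∈ 𝔞², and δF(μ) = 0; moreover for any α ∈ 𝔞¹, F(μ + α) = F(μ) + δα, so the cohomology class o₂(μ + 𝔞¹) := [F(μ)] ∈ H²(𝔞) is well-defined, depending only on μ + 𝔞¹. -/
/-- A (ℤ-graded) differential graded Lie algebra over ℚ: a family of ℚ-modules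
`G i`, a degree-1 differential `d` with `d ∘ d = 0`, and a graded bracket
satisfying graded antisymmetry, the graded Leibniz rule and the graded Jacobi
identity. -/
structure DGLA where
  G : ℤ → Type
  [grp : ∀ i, AddCommGroup (G i)]
  [mod : ∀ i, Module ℚ (G i)]
  d : ∀ i, G i →ₗ[ℚ] G (i + 1)
  bracket : ∀ i j, G i →ₗ[ℚ] G j →ₗ[ℚ] G (i + j)
  d_sq : ∀ i (x : G i), d (i + 1) (d i x) = 0
  antisymm : ∀ i j (x : G i) (y : G j),
    bracket i j x y
      = (-((-1 : ℚ) ^ (i * j))) • cast (congrArg G (add_comm j i)) (bracket j i y x)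
  leibniz : ∀ i j (x : G i) (y : G j),
    d (i + j) (bracket i j x y)
      = cast (congrArg G (by ring : i + 1 + j = i + j + 1)) (bracket (i + 1) j (d i x) y)
        + ((-1 : ℚ) ^ i) •
          cast (congrArg G (by ring : i + (j + 1) = i + j + 1)) (bracket i (j + 1) x (d j y))
  jacobi : ∀ i j k (x : G i) (y : G j) (z : G k),
    cast (congrArg G (by ring : i + (j + k) = i + j + k)) (bracket i (j + k) x (bracket j k y z))
      = bracket (i + j) k (bracket i j x y) z
        + ((-1 : ℚ) ^ (i * j)) •
          cast (congrArg G (by ring : j + (i + k) = i + j + k)) (bracket j (i + k) y (bracket i k x z))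

attribute [instance] DGLA.grp DGLA.mod

/-- Transport along an equality of degrees. -/
def DGLA.cst (𝔤 : DGLA) {i j : ℤ} (h : i = j) (x : 𝔤.G i) : 𝔤.G j :=
  cast (congrArg 𝔤.G h) x

/-- The curvature of a degree-1 element: `F(μ) = δμ + (1/2)[μ,μ]`. -/
def DGLA.curv (𝔤 : DGLA) (μ : 𝔤.G 1) : 𝔤.G 2 :=
  𝔤.d 1 μ + (1/2 : ℚ) • 𝔤.bracket 1 1 μ μ

/-- **The obstruction class `o₂` is well defined.** Let `𝔞` be a central
subcomplex of a DGLA `𝔤` and let `μ ∈ 𝔤¹` be such that `μ + 𝔞¹` is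
Maurer-Cartan in `𝔤/𝔞`, i.e. `F(μ) ∈ 𝔞²`.  Then `δF(μ) = 0`; moreover
`F(μ + α) = F(μ) + δα` for every `α ∈ 𝔞¹`, and for any other representative
`μ'` of the same class (`μ − μ' ∈ 𝔞¹`, `F(μ') ∈ 𝔞²`) the difference
`F(μ) − F(μ')` is a coboundary `δα`, `α ∈ 𝔞¹`; hence the class
`o₂(μ + 𝔞¹) = [F(μ)] ∈ H²(𝔞)` is well defined. -/
theorem obstruction_class_well_defined (𝔤 : DGLA)
    (A1 : Submodule ℚ (𝔤.G 1)) (A2 : Submodule ℚ (𝔤.G 2))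
    (hdA : ∀ a ∈ A1, 𝔤.d 1 a ∈ A2)
    (hcentral1 : ∀ a ∈ A1, ∀ j (x : 𝔤.G j), 𝔤.bracket 1 j a x = 0)
    (hcentral1' : ∀ a ∈ A1, ∀ j (x : 𝔤.G j), 𝔤.bracket j 1 x a = 0)
    (hcentral2 : ∀ a ∈ A2, ∀ j (x : 𝔤.G j), 𝔤.bracket 2 j a x = 0)
    (hcentral2' : ∀ a ∈ A2, ∀ j (x : 𝔤.G j), 𝔤.bracket j 2 x a = 0)
    (μ : 𝔤.G 1) (hμ : 𝔤.curv μ ∈ A2) :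
    𝔤.d 2 (𝔤.curv μ) = 0 ∧
    (∀ α ∈ A1, 𝔤.curv (μ + α) = 𝔤.curv μ + 𝔤.cst (by norm_num) (𝔤.d 1 α)) ∧
    (∀ μ' : 𝔤.G 1, 𝔤.curv μ' ∈ A2 → μ - μ' ∈ A1 →
      ∃ α ∈ A1, 𝔤.curv μ - 𝔤.curv μ' = 𝔤.cst (by norm_num) (𝔤.d 1 α)) := by
  -- abbreviation
  set B := 𝔤.bracket (1+1) 1 (𝔤.bracket 1 1 μ μ) μ with hBdef
  -- Jacobi + antisymmetry : [[μ,μ],μ] = 0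
  have hJ := 𝔤.jacobi 1 1 1 μ μ μ
  have hA := 𝔤.antisymm 1 2 μ (𝔤.bracket 1 1 μ μ)
  simp only [cast_eq] at hJ hA
  norm_num at hJ hA
  have hA' : 𝔤.bracket 1 (1+1) μ (𝔤.bracket 1 1 μ μ) = -B := hA
  rw [hA'] at hJ
  -- hJ : -B = B + - -B
  have hB : B = 0 := by
    have h0 : B + (B + B) = 0 := by
      rw [neg_neg] at hJ
      rw [← hJ, add_neg_cancel]
    have h3 : (3:ℚ) • B = 0 := by rw [← h0]; module
    have := smul_eq_zero.mp h3
    simpa using this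
  -- [curv μ, μ] = 0 by centrality
  have hc : 𝔤.bracket (1+1) 1 (𝔤.curv μ) μ = 0 := hcentral2 _ hμ 1 μ
  -- split curv in the bracket
  have hsplit : 𝔤.bracket (1+1) 1 (𝔤.curv μ) μ
      = 𝔤.bracket (1+1) 1 (𝔤.d 1 μ) μ + (1/2:ℚ) • B := by
    rw [hBdef]
    show 𝔤.bracket (1+1) 1 (𝔤.d 1 μ + (1/2:ℚ) • 𝔤.bracket 1 1 μ μ) μ = _
    simp [map_add, map_smul, LinearMap.add_apply, LinearMap.smul_apply]
  have h1 : 𝔤.bracket (1+1) 1 (𝔤.d 1 μ) μ = 0 := by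
    have := hsplit
    rw [hc, hB, smul_zero, add_zero] at this
    exact this.symm
  have hA2 := 𝔤.antisymm 1 2 μ (𝔤.d 1 μ)
  simp only [cast_eq] at hA2
  norm_num at hA2
  have h2 : 𝔤.bracket 1 (1+1) μ (𝔤.d 1 μ) = 0 := by
    have hA2' : 𝔤.bracket 1 (1+1) μ (𝔤.d 1 μ) = -(𝔤.bracket (1+1) 1 (𝔤.d 1 μ) μ) := hA2
    rw [hA2', h1, neg_zero]
  have hL := 𝔤.leibniz 1 1 μ μ
  simp only [cast_eq] at hL
  norm_num at hL
  rw [h1, h2] at hL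
  norm_num at hL
  -- hL : d (1+1) (bracket 1 1 μ μ) = 0
  have hdb : 𝔤.d 2 (𝔤.bracket 1 1 μ μ) = 0 := hL
  have hdd : 𝔤.d 2 (𝔤.d 1 μ) = 0 := 𝔤.d_sq 1 μ
  have part1 : 𝔤.d 2 (𝔤.curv μ) = 0 := by
    show 𝔤.d 2 (𝔤.d 1 μ + (1/2:ℚ) • 𝔤.bracket 1 1 μ μ) = 0
    rw [map_add, map_smul, hdd, hdb, smul_zero, add_zero]
  -- key lemma for parts 2 and 3
  have key : ∀ (ν α : 𝔤.G 1), α ∈ A1 →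
      𝔤.curv (ν + α) = 𝔤.curv ν + 𝔤.cst (by norm_num : (1:ℤ)+1 = 2) (𝔤.d 1 α) := by
    intro ν α hα
    unfold DGLA.curv DGLA.cst
    simp only [cast_eq, map_add, LinearMap.add_apply,
      hcentral1 α hα 1 ν, hcentral1' α hα 1 ν, hcentral1 α hα 1 α]
    abel
  refine ⟨part1, fun α hα => key μ α hα, fun μ' hμ' hd => ⟨μ - μ', hd, ?_⟩⟩
  have hk := key μ' (μ - μ') hd
  rw [show μ' + (μ - μ') = μ from by abel] at hk
  rw [hk]
  abel
end

section
/- (Duflo's lemma / derivative of exponential) Let L be a nilpotent Lie algebra over a field of characteristic 0, D a derivation of L, u ∈ L. Then (D(exp u))(exp u)⁻¹ = ((e^{ad(u)} − 1)/ad(u))(D(u)), where (e^{ad(u)} − 1)/ad(u) = Σ_{k≥0} ad(u)^k/(k+1)! (a finite sum by nilpotency). -/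
attribute [local instance 100] LieRing.ofAssociativeRing

/-- The (truncated) exponential `Σ_{k<n} u^k / k!` of a nilpotent element of an
associative ℚ-algebra; when `u ^ n = 0` this is the exponential `exp u`. -/
noncomputable def nilExp (A : Type) [Ring A] [Algebra ℚ A] (n : ℕ) (u : A) : A :=
  ∑ k ∈ Finset.range n, ((Nat.factorial k : ℚ))⁻¹ • u ^ k

lemma binom_ad {A : Type} [Ring A] [Algebra ℚ A] (u w : A) (k : ℕ) :
    u ^ k * w = ∑ j ∈ Finset.range (k+1),
      (k.choose j) • (((LieAlgebra.ad ℚ A u) ^ j) w * u ^ (k - j)) := by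
  set a := LieAlgebra.ad ℚ A u with ha
  have hcomm : Commute (LinearMap.mulRight ℚ u) a := by
    ext x
    simp only [Module.End.mul_apply, ha, LieAlgebra.ad_apply, Ring.lie_def,
      LinearMap.mulRight_apply, sub_mul, mul_assoc]
  have hl : LinearMap.mulLeft ℚ u = LinearMap.mulRight ℚ u + a := by
    ext x
    simp [ha, LieAlgebra.ad_apply, Ring.lie_def]
  have h1 : u ^ k * w = ((LinearMap.mulLeft ℚ u) ^ k) w := by
    rw [LinearMap.pow_mulLeft, LinearMap.mulLeft_apply]
  rw [h1, hl, hcomm.add_pow, LinearMap.sum_apply]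
  rw [← Finset.sum_range_reflect]
  refine Finset.sum_congr rfl ?_
  intro m hm
  simp only [Finset.mem_range] at hm
  have hmk : m ≤ k := by omega
  have e1 : k + 1 - 1 - m = k - m := by omega
  have e2 : k - (k - m) = m := by omega
  rw [e1, Module.End.mul_apply, Module.End.mul_apply, Module.End.natCast_apply,
    map_nsmul, map_nsmul, LinearMap.pow_mulRight, LinearMap.mulRight_apply,
    Nat.choose_symm hmk, e2]

lemma leibniz_pow {A : Type} [Ring A] [Algebra ℚ A]
    (D : A →ₗ[ℚ] A) (hD : ∀ a b : A, D (a * b) = D a * b + a * D b)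
    (u : A) (k : ℕ) :
    D (u ^ k) = ∑ j ∈ Finset.range k,
      (k.choose (j+1)) • (((LieAlgebra.ad ℚ A u) ^ j) (D u) * u ^ (k - 1 - j)) := by
  have hD1 : D 1 = 0 := by
    have h := hD 1 1
    simp only [mul_one, one_mul] at h
    exact (right_eq_add.mp h)
  set a := LieAlgebra.ad ℚ A u with ha
  induction k with
  | zero => simp [hD1]
  | succ k ih =>
      rw [pow_succ, hD (u ^ k) u, ih, Finset.sum_mul]
      have step1 : ∀ j ∈ Finset.range k,
          (k.choose (j+1)) • ((a ^ j) (D u) * u ^ (k - 1 - j)) * u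
            = (k.choose (j+1)) • ((a ^ j) (D u) * u ^ (k - j)) := by
        intro j hj
        simp only [Finset.mem_range] at hj
        rw [smul_mul_assoc, mul_assoc, ← pow_succ,
          show k - 1 - j + 1 = k - j from by omega]
      rw [Finset.sum_congr rfl step1, binom_ad u (D u) k]
      have ext1 : ∑ j ∈ Finset.range k, (k.choose (j+1)) • ((a ^ j) (D u) * u ^ (k - j))
          = ∑ j ∈ Finset.range (k+1), (k.choose (j+1)) • ((a ^ j) (D u) * u ^ (k - j)) := by
        rw [Finset.sum_range_succ, Nat.choose_succ_self]
        simp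
      rw [ext1, ← Finset.sum_add_distrib]
      refine Finset.sum_congr rfl ?_
      intro j hj
      simp only [Finset.mem_range] at hj
      have e1 : k + 1 - 1 - j = k - j := by omega
      rw [e1, ← add_smul, Nat.choose_succ_succ', add_comm (k.choose (j+1))]

lemma triangle_sum {A : Type} [AddCommMonoid A] (G : ℕ → ℕ → A) (N n : ℕ)
    (hGN : ∀ j i, N ≤ j → G j i = 0) (hGn : ∀ j i, n ≤ i → G j i = 0) :
    ∑ k ∈ Finset.range (N + n), ∑ j ∈ Finset.range k, G j (k - 1 - j)
      = ∑ j ∈ Finset.range N, ∑ i ∈ Finset.range n, G j i := by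
  set M := N + n with hM
  have h1 : ∀ k ∈ Finset.range M, ∑ j ∈ Finset.range k, G j (k - 1 - j)
      = ∑ j ∈ Finset.range M, if j < k then G j (k - 1 - j) else 0 := by
    intro k hk
    simp only [Finset.mem_range] at hk
    rw [← Finset.sum_filter]
    congr 1
    ext j
    simp only [Finset.mem_filter, Finset.mem_range]
    omega
  rw [Finset.sum_congr rfl h1, Finset.sum_comm]
  have h2 : ∀ j ∈ Finset.range M, (∑ k ∈ Finset.range M, if j < k then G j (k - 1 - j) else 0)
      = ∑ k ∈ Finset.Ico (j+1) M, G j (k - 1 - j) := by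
    intro j hj
    rw [← Finset.sum_filter]
    congr 1
    ext k
    simp only [Finset.mem_filter, Finset.mem_range, Finset.mem_Ico]
    omega
  rw [Finset.sum_congr rfl h2]
  have h3 : ∀ j ∈ Finset.range M, (∑ k ∈ Finset.Ico (j+1) M, G j (k - 1 - j))
      = ∑ i ∈ Finset.range (M - (j+1)), G j i := by
    intro j hj
    rw [Finset.sum_Ico_eq_sum_range]
    refine Finset.sum_congr rfl ?_
    intro i hi
    congr 1
    omega
  rw [Finset.sum_congr rfl h3]
  rw [← Finset.sum_subset (Finset.range_subset_range.mpr (by omega : N ≤ M))]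
  · refine Finset.sum_congr rfl ?_
    intro j hj
    simp only [Finset.mem_range] at hj
    rw [← Finset.sum_subset (Finset.range_subset_range.mpr (by omega : n ≤ M - (j+1)))]
    intro i _ hi
    simp only [Finset.mem_range, not_lt] at hi
    exact hGn j i hi
  · intro j _ hj
    simp only [Finset.mem_range, not_lt] at hj
    exact Finset.sum_eq_zero fun i _ => hGN j i hj

/-- **Duflo's lemma: the logarithmic derivative of an exponential.** With `L` a
nilpotent Lie algebra (realized inside an associative ℚ-algebra), `D` a
derivation preserving `L`, and `u ∈ L` nilpotent:
`(D(exp u))(exp u)⁻¹ = ((e^{ad u} − 1)/ad u)(Du) = Σ_{k} ad(u)^k/(k+1)! (Du)`,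
the sum being finite since `ad u` is nilpotent. -/
theorem log_derivative_of_exponential
    (A : Type) [Ring A] [Algebra ℚ A]
    (L : LieSubalgebra ℚ A)
    (hnilL : ∀ x ∈ L, IsNilpotent x)
    (D : A →ₗ[ℚ] A) (hD : ∀ a b : A, D (a * b) = D a * b + a * D b)
    (hDL : ∀ x ∈ L, D x ∈ L)
    (σ : Aˣ) (u : A) (hu : u ∈ L)
    (n : ℕ) (hun : u ^ n = 0)
    (hσ : (σ : A) = nilExp A n u)
    (N : ℕ) (hN : (LieAlgebra.ad ℚ A u) ^ N = 0) :
    D ↑σ * ↑σ⁻¹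
      = ∑ k ∈ Finset.range N,
          ((Nat.factorial (k + 1) : ℚ))⁻¹ • ((LieAlgebra.ad ℚ A u) ^ k) (D u) := by
  set a := LieAlgebra.ad ℚ A u with ha
  set v := D u with hv
  set G : ℕ → ℕ → A :=
    fun j i => ((((j+1).factorial * i.factorial : ℕ) : ℚ))⁻¹ • ((a ^ j) v * u ^ i) with hG
  have hGN : ∀ j i, N ≤ j → G j i = 0 := by
    intro j i hj
    have haj : a ^ j = 0 := by
      rw [show j = (j - N) + N from by omega, pow_add, hN, mul_zero]
    simp [hG, haj]
  have hGn : ∀ j i, n ≤ i → G j i = 0 := by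
    intro j i hi
    have hui : u ^ i = 0 := by
      rw [show i = n + (i - n) from by omega, pow_add, hun, zero_mul]
    simp [hG, hui]
  have key : D ↑σ
      = (∑ k ∈ Finset.range N, ((Nat.factorial (k + 1) : ℚ))⁻¹ • (a ^ k) v) * ↑σ := by
    rw [hσ]
    calc D (nilExp A n u)
        = ∑ k ∈ Finset.range n, ((Nat.factorial k : ℚ))⁻¹ • D (u ^ k) := by
          rw [nilExp, map_sum]
          exact Finset.sum_congr rfl fun k _ => map_smul D _ _
      _ = ∑ k ∈ Finset.range (N + n), ((Nat.factorial k : ℚ))⁻¹ • D (u ^ k) := by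
          refine Finset.sum_subset (Finset.range_subset_range.mpr (by omega)) ?_
          intro k _ hk
          simp only [Finset.mem_range, not_lt] at hk
          have hui : u ^ k = 0 := by
            rw [show k = n + (k - n) from by omega, pow_add, hun, zero_mul]
          simp [hui]
      _ = ∑ k ∈ Finset.range (N + n), ∑ j ∈ Finset.range k, G j (k - 1 - j) := by
          refine Finset.sum_congr rfl fun k _ => ?_
          rw [leibniz_pow D hD u k, Finset.smul_sum]
          refine Finset.sum_congr rfl fun j hj => ?_
          simp only [Finset.mem_range] at hj
          rw [← Nat.cast_smul_eq_nsmul ℚ, smul_smul, hG]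
          congr 1
          have hj' : j + 1 ≤ k := hj
          have hfac : k.choose (j+1) * (j+1).factorial * (k - (j+1)).factorial
              = k.factorial := Nat.choose_mul_factorial_mul_factorial hj'
          have e : k - 1 - j = k - (j+1) := by omega
          rw [e]
          have h1 : ((j+1).factorial : ℚ) ≠ 0 :=
            Nat.cast_ne_zero.mpr (Nat.factorial_ne_zero _)
          have h2 : (((k - (j+1)).factorial : ℕ) : ℚ) ≠ 0 :=
            Nat.cast_ne_zero.mpr (Nat.factorial_ne_zero _)
          have h3 : ((k.factorial : ℕ) : ℚ) ≠ 0 :=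
            Nat.cast_ne_zero.mpr (Nat.factorial_ne_zero _)
          have hfacQ : ((k.choose (j+1) : ℚ)) * ((j+1).factorial : ℚ)
              * (((k - (j+1)).factorial : ℕ) : ℚ) = ((k.factorial : ℕ) : ℚ) := by
            exact_mod_cast congrArg (Nat.cast : ℕ → ℚ) hfac
          push_cast
          field_simp
          linear_combination hfacQ
      _ = ∑ j ∈ Finset.range N, ∑ i ∈ Finset.range n, G j i :=
          triangle_sum G N n hGN hGn
      _ = (∑ j ∈ Finset.range N, ((Nat.factorial (j + 1) : ℚ))⁻¹ • (a ^ j) v)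
            * (∑ i ∈ Finset.range n, ((Nat.factorial i : ℚ))⁻¹ • u ^ i) := by
          rw [Finset.sum_mul_sum]
          refine Finset.sum_congr rfl fun j _ => Finset.sum_congr rfl fun i _ => ?_
          rw [hG, smul_mul_smul_comm]
          congr 1
          push_cast
          rw [mul_inv]
      _ = (∑ k ∈ Finset.range N, ((Nat.factorial (k + 1) : ℚ))⁻¹ • (a ^ k) v)
            * nilExp A n u := by rw [nilExp]
  rw [key, Units.mul_inv_cancel_right]
end

section
/- Let M be a manifold (or replace by an interval with parameters), L a vector bundle with connection ∇, and let Hol^t_a denote the holonomy along the t-direction on M × I, defined as the unique solution of ∇_{∂_t}(Hol^t_a) = 0 with initial condition Hol^t_a|_{t=a} = Id. Then for any vector field ξ on M (lifted to M × I), the logarithmic covariant derivative satisfies ∇_ξ(Hol^t_a) ∘ (Hol^t_a)⁻¹ = ∫_a^t (Hol^t_s)⁻¹ (ι_ξ R) ds, where R = ∇² is the curvature. Equivalently, both sides solve the initial value problem ∇_{∂_t}Φ = ι_{∂_t}ι_ξ R, Φ|_{t=a} = 0. -/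
open Asymptotics Filter Topology

lemma ptwise_inv_hasDerivAt {B : Type} [NormedRing B] [NormedAlgebra ℝ B]
    {f g : ℝ → B} {f' : B} {t : ℝ}
    (hf : HasDerivAt f f' t) (h : ∀ x, f x * g x = 1 ∧ g x * f x = 1) :
    HasDerivAt g (-(g t * f' * g t)) t := by
  have key : ∀ x, g x - g t = g x * (f t - f x) * g t := by
    intro x
    rw [mul_sub, sub_mul, mul_assoc, (h t).1, mul_one, (h x).2, one_mul]
  have hcont : ContinuousAt f t := hf.continuousAt
  have htend : Tendsto (fun x => ‖f t - f x‖ * ‖g t‖) (𝓝 t) (𝓝 0) := by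
    have : Tendsto (fun x => f t - f x) (𝓝 t) (𝓝 (f t - f t)) :=
      tendsto_const_nhds.sub hcont
    rw [sub_self] at this
    simpa using (this.norm.mul_const ‖g t‖)
  have hsmall : ∀ᶠ x in 𝓝 t, ‖f t - f x‖ * ‖g t‖ ≤ 1/2 :=
    (htend.eventually_lt_const (by norm_num : (0:ℝ) < 1/2)).mono fun x hx => hx.le
  have hgbound : ∀ᶠ x in 𝓝 t, ‖g x‖ ≤ 2 * ‖g t‖ := by
    filter_upwards [hsmall] with x hx
    have h1 : ‖g x - g t‖ ≤ ‖g x‖ * (‖f t - f x‖ * ‖g t‖) := by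
      rw [key x, mul_assoc]
      exact (norm_mul_le _ _).trans (by gcongr; exact norm_mul_le _ _)
    have h2 : ‖g x‖ ≤ ‖g t‖ + ‖g x - g t‖ := by
      simpa using norm_add_le (g t) (g x - g t)
    nlinarith [norm_nonneg (g x), norm_nonneg (g x - g t)]
  have hg : (fun x => g x - g t) =O[𝓝 t] fun x => f x - f t := by
    apply IsBigO.of_bound (2 * ‖g t‖ * ‖g t‖)
    filter_upwards [hgbound] with x hx
    have h1 : ‖g x - g t‖ ≤ ‖g x‖ * ‖f t - f x‖ * ‖g t‖ := by
      rw [key x]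
      exact (norm_mul_le _ _).trans (by gcongr; exact norm_mul_le _ _)
    rw [norm_sub_rev (f t)] at h1
    nlinarith [mul_le_mul_of_nonneg_right
      (mul_le_mul_of_nonneg_right hx (norm_nonneg (f x - f t))) (norm_nonneg (g t)),
      norm_nonneg (f x - f t), norm_nonneg (g t)]
  have hO : (fun x => f x - f t) =O[𝓝 t] fun x => x - t := hf.isBigO_sub
  have hr : (fun x => f x - f t - (x - t) • f') =o[𝓝 t] fun x => x - t :=
    hasDerivAt_iff_isLittleO.mp hf
  have hB : (fun x => (f t - f x) * g t) =o[𝓝 t] fun _ => (1:ℝ) := by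
    rw [isLittleO_one_iff]
    have : Tendsto (fun x => f t - f x) (𝓝 t) (𝓝 (f t - f t)) :=
      tendsto_const_nhds.sub hcont
    rw [sub_self] at this
    simpa using this.mul_const (g t)
  have term1 : (fun x => (g x - g t) * ((f t - f x) * g t)) =o[𝓝 t] fun x => x - t := by
    have := (hg.trans hO).mul_isLittleO hB
    simpa using this
  have term2 : (fun x => g t * (f x - f t - (x - t) • f') * g t) =o[𝓝 t] fun x => x - t := by
    have := (hr.const_mul_left (g t)).mul_isBigO
      (isBigO_const_const (g t) (one_ne_zero : (1:ℝ) ≠ 0) (𝓝 t))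
    simpa using this
  rw [hasDerivAt_iff_isLittleO]
  refine (term1.sub term2).congr' (Eventually.of_forall fun x => ?_) EventuallyEq.rfl
  have e2 : ∀ y, g x * (f x * y) = y := fun y => by rw [← mul_assoc, (h x).2, one_mul]
  dsimp only
  rw [smul_neg, sub_neg_eq_add]
  simp only [mul_sub, sub_mul, mul_add, add_mul, smul_sub, smul_add,
    mul_smul_comm, smul_mul_assoc, mul_assoc, (h t).1, mul_one, e2]
  abel



/-- **Logarithmic covariant derivative of holonomy.** Work over `M × I` with
`M = ℝ` (coordinate `s`, vector field `ξ = ∂_s`) and `I` the `t`-line, with a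
connection `∇ = d + A` (with components `At`, `As`) on the trivial bundle with
fiber a normed algebra `B` (playing the role of nilpotent endomorphisms `E_L`).
Let `Hol = Hol^t_a` be the holonomy along `t`, the solution of
`∇_{∂_t} Hol = 0`, `Hol|_{t=a} = Id`, with pointwise inverse `HolInv`.  Then
`Φ := ∇_ξ(Hol) ∘ Hol⁻¹` (where `∇_ξ Hol = ∂_s Hol + As·Hol − Hol·As(·,a)` is
the covariant derivative in the bundle `Hom(L_a, L)`) solves the initial value
problem `∇_{∂_t} Φ = ι_{∂_t} ι_ξ R`, `Φ|_{t=a} = 0`, where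
`R(∂_t,∂_s) = ∂_t As − ∂_s At + [At, As]` is the curvature of `∇`; this is the
characterization of `∇_ξ(Hol^t_a)(Hol^t_a)⁻¹ = ∫_a^t (Hol^t_s)⁻¹(ι_ξ R)`. -/
theorem holonomy_log_covariant_derivative
    (B : Type) [NormedRing B] [NormedAlgebra ℝ B]
    (a : ℝ)
    (At As Hol HolInv DsHol DtAs DsAt DtDsHol : ℝ → ℝ → B)
    -- `Hol` solves `∇_{∂_t} Hol = 0` with `Hol|_{t=a} = 1`, and is invertible
    (hHolODE : ∀ s t, HasDerivAt (fun t' => Hol s t') (-(At s t * Hol s t)) t)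
    (hHolInit : ∀ s, Hol s a = 1)
    (hInv : ∀ s t, Hol s t * HolInv s t = 1 ∧ HolInv s t * Hol s t = 1)
    -- partial derivatives
    (hDsHol : ∀ s t, HasDerivAt (fun s' => Hol s' t) (DsHol s t) s)
    (hDtAs : ∀ s t, HasDerivAt (fun t' => As s t') (DtAs s t) t)
    (hDsAt : ∀ s t, HasDerivAt (fun s' => At s' t) (DsAt s t) s)
    -- equality of the mixed partial derivatives of `Hol`
    (hMix : ∀ s t, HasDerivAt (fun t' => DsHol s t') (DtDsHol s t) t ∧
        HasDerivAt (fun s' => -(At s' t * Hol s' t)) (DtDsHol s t) s) :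
    ∀ s t,
      -- `Φ|_{t=a} = 0`
      ((DsHol s a + As s a * Hol s a - Hol s a * As s a) * HolInv s a = 0) ∧
      -- `∂_t Φ + [At, Φ] = ι_{∂_t} ι_ξ R`, i.e. `∇_{∂_t} Φ = ι_{∂_t} ι_ξ R`
      HasDerivAt
        (fun t' => (DsHol s t' + As s t' * Hol s t' - Hol s t' * As s a) * HolInv s t')
        ((DtAs s t - DsAt s t + (At s t * As s t - As s t * At s t))
          - (At s t * ((DsHol s t + As s t * Hol s t - Hol s t * As s a) * HolInv s t)
             - ((DsHol s t + As s t * Hol s t - Hol s t * As s a) * HolInv s t) * At s t))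
        t := by
  intro s t
  have h1 := (hInv s t).1
  have h2 := (hInv s t).2
  constructor
  · -- initial condition
    have h0 : DsHol s a = 0 := by
      have hc : HasDerivAt (fun s' => Hol s' a) 0 s := by
        have he : (fun s' => Hol s' a) = fun _ => (1:B) := funext fun x => hHolInit x
        rw [he]; exact hasDerivAt_const s 1
      exact (hDsHol s a).unique hc
    rw [h0, hHolInit s]
    simp
  · -- the ODE
    have hval : DtDsHol s t = -(DsAt s t * Hol s t + At s t * DsHol s t) :=
      (hMix s t).2.unique (((hDsAt s t).mul (hDsHol s t)).neg)
    have hInvD : HasDerivAt (fun t' => HolInv s t') (HolInv s t * At s t) t := by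
      have := ptwise_inv_hasDerivAt (hHolODE s t) (fun x => hInv s x)
      have e : -(HolInv s t * -(At s t * Hol s t) * HolInv s t) = HolInv s t * At s t := by
        rw [mul_neg, neg_mul, neg_neg, mul_assoc, mul_assoc, h1, mul_one]
      rwa [e] at this
    have hN : HasDerivAt
        (fun t' => DsHol s t' + As s t' * Hol s t' - Hol s t' * As s a)
        (DtDsHol s t + (DtAs s t * Hol s t + As s t * -(At s t * Hol s t))
          - -(At s t * Hol s t) * As s a) t :=
      ((hMix s t).1.add ((hDtAs s t).mul (hHolODE s t))).sub ((hHolODE s t).mul_const (As s a))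
    have hF := hN.mul hInvD
    convert hF using 1
    · rfl
    rw [hval]
    have e1 : ∀ y, Hol s t * (HolInv s t * y) = y := fun y => by
      rw [← mul_assoc, h1, one_mul]
    simp only [mul_sub, sub_mul, mul_add, add_mul, mul_neg, neg_mul, mul_assoc, h1, e1,
      mul_one, one_mul]
    abel
end
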